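/- If two plactic biwords Q and Q' are connected by a single generalized Knuth relation, then for every positive integer i, the biwords Q_{>i} and Q'_{>i} (obtained by removing all biletters with top entry at most i) are either equal or connected by a single generalized Knuth relation. -/

import Mathlib

/-- A biletter is a pair `(a, k)` of positive integers with `a ≤ k`. -/
def Biletter (p : ℕ × ℕ) : Prop := 1 ≤ p.1 ∧ p.1 ≤ p.2

/-- A plactic biword: a word of biletters with weakly decreasing bottom row. -/
def Plactic (Q : List (ℕ × ℕ)) : Prop :=
  (∀ p ∈ Q, Biletter p) ∧ (Q.map Prod.snd).Pairwise (· ≥ ·)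

/-- One application of a generalized Knuth relation (both sides must be plactic). -/
inductive KnuthStep : List (ℕ × ℕ) → List (ℕ × ℕ) → Prop
  | rel1 (u v : List (ℕ × ℕ)) (a b c k : ℕ) (h1 : a < b) (h2 : b ≤ c)
      (hL : Plactic (u ++ [(b,k),(a,k),(c,k)] ++ v))
      (hR : Plactic (u ++ [(b,k),(c,k),(a,k)] ++ v)) :
      KnuthStep (u ++ [(b,k),(a,k),(c,k)] ++ v) (u ++ [(b,k),(c,k),(a,k)] ++ v)
  | rel2 (u v : List (ℕ × ℕ)) (a b c k : ℕ) (h1 : a ≤ b) (h2 : b < c)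
      (hL : Plactic (u ++ [(a,k),(c,k),(b,k)] ++ v))
      (hR : Plactic (u ++ [(c,k),(a,k),(b,k)] ++ v)) :
      KnuthStep (u ++ [(a,k),(c,k),(b,k)] ++ v) (u ++ [(c,k),(a,k),(b,k)] ++ v)
  | rel3 (u v : List (ℕ × ℕ)) (a b k : ℕ) (h : a ≤ b)
      (hL : Plactic (u ++ [(a,k),(b,k)] ++ v))
      (hR : Plactic (u ++ [(a,k+1),(b,k)] ++ v)) :
      KnuthStep (u ++ [(a,k),(b,k)] ++ v) (u ++ [(a,k+1),(b,k)] ++ v)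
  | rel4 (u v : List (ℕ × ℕ)) (a b k : ℕ) (h : a < b)
      (hL : Plactic (u ++ [(b,k+1),(a,k+1)] ++ v))
      (hR : Plactic (u ++ [(b,k+1),(a,k)] ++ v)) :
      KnuthStep (u ++ [(b,k+1),(a,k+1)] ++ v) (u ++ [(b,k+1),(a,k)] ++ v)

/-- Two biwords are connected by a single generalized Knuth relation. -/
def KnuthRel (Q Q' : List (ℕ × ℕ)) : Prop := KnuthStep Q Q' ∨ KnuthStep Q' Q

/-- Connected by a finite chain of generalized Knuth relations. -/
def KnuthEquiv : List (ℕ × ℕ) → List (ℕ × ℕ) → Prop := Relation.ReflTransGen KnuthRel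

/-- `Q_{>i}`: remove all biletters with top entry at most `i`. -/
def after (i : ℕ) (Q : List (ℕ × ℕ)) : List (ℕ × ℕ) := Q.filter (fun p => i < p.1)


lemma Plactic.after_filter {Q : List (ℕ × ℕ)} (h : Plactic Q) (i : ℕ) :
    Plactic (after i Q) := by
  constructor
  · intro p hp
    exact h.1 p (List.mem_of_mem_filter hp)
  · exact h.2.sublist ((List.filter_sublist).map _)

lemma knuthstep_restricts (i : ℕ) (Q Q' : List (ℕ × ℕ)) (hs : KnuthStep Q Q') :
    after i Q = after i Q' ∨ KnuthStep (after i Q) (after i Q') := by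
  cases hs with
  | rel1 u v a b c k h1 h2 hL hR =>
    by_cases hia : i < a
    · have hib : i < b := hia.trans h1
      have hic : i < c := hib.trans_le h2
      right
      have e1 : after i (u ++ [(b,k),(a,k),(c,k)] ++ v)
          = after i u ++ [(b,k),(a,k),(c,k)] ++ after i v := by
        simp [after, List.filter_append, hia, hib, hic]
      have e2 : after i (u ++ [(b,k),(c,k),(a,k)] ++ v)
          = after i u ++ [(b,k),(c,k),(a,k)] ++ after i v := by
        simp [after, List.filter_append, hia, hib, hic]
      rw [e1, e2]
      exact KnuthStep.rel1 _ _ a b c k h1 h2 (e1 ▸ hL.after_filter i) (e2 ▸ hR.after_filter i)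
    · left
      simp [after, List.filter_append, List.filter_cons, hia]
  | rel2 u v a b c k h1 h2 hL hR =>
    by_cases hia : i < a
    · have hib : i < b := hia.trans_le h1
      have hic : i < c := hib.trans h2
      right
      have e1 : after i (u ++ [(a,k),(c,k),(b,k)] ++ v)
          = after i u ++ [(a,k),(c,k),(b,k)] ++ after i v := by
        simp [after, List.filter_append, hia, hib, hic]
      have e2 : after i (u ++ [(c,k),(a,k),(b,k)] ++ v)
          = after i u ++ [(c,k),(a,k),(b,k)] ++ after i v := by
        simp [after, List.filter_append, hia, hib, hic]
      rw [e1, e2]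
      exact KnuthStep.rel2 _ _ a b c k h1 h2 (e1 ▸ hL.after_filter i) (e2 ▸ hR.after_filter i)
    · left
      simp [after, List.filter_append, List.filter_cons, hia]
  | rel3 u v a b k hab hL hR =>
    by_cases hia : i < a
    · have hib : i < b := hia.trans_le hab
      right
      have e1 : after i (u ++ [(a,k),(b,k)] ++ v)
          = after i u ++ [(a,k),(b,k)] ++ after i v := by
        simp [after, List.filter_append, hia, hib]
      have e2 : after i (u ++ [(a,k+1),(b,k)] ++ v)
          = after i u ++ [(a,k+1),(b,k)] ++ after i v := by
        simp [after, List.filter_append, hia, hib]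
      rw [e1, e2]
      exact KnuthStep.rel3 _ _ a b k hab (e1 ▸ hL.after_filter i) (e2 ▸ hR.after_filter i)
    · left
      simp [after, List.filter_append, List.filter_cons, hia]
  | rel4 u v a b k hab hL hR =>
    by_cases hia : i < a
    · have hib : i < b := hia.trans hab
      right
      have e1 : after i (u ++ [(b,k+1),(a,k+1)] ++ v)
          = after i u ++ [(b,k+1),(a,k+1)] ++ after i v := by
        simp [after, List.filter_append, hia, hib]
      have e2 : after i (u ++ [(b,k+1),(a,k)] ++ v)
          = after i u ++ [(b,k+1),(a,k)] ++ after i v := by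
        simp [after, List.filter_append, hia, hib]
      rw [e1, e2]
      exact KnuthStep.rel4 _ _ a b k hab (e1 ▸ hL.after_filter i) (e2 ▸ hR.after_filter i)
    · left
      simp [after, List.filter_append, List.filter_cons, hia]

theorem single_knuth_relation_restricts (Q Q' : List (ℕ × ℕ)) (h : KnuthRel Q Q')
    (i : ℕ) (hi : 1 ≤ i) :
    after i Q = after i Q' ∨ KnuthRel (after i Q) (after i Q') := by
  rcases h with hs | hs
  · rcases knuthstep_restricts i Q Q' hs with he | hk
    · exact Or.inl he
    · exact Or.inr (Or.inl hk)
  · rcases knuthstep_restricts i Q' Q hs with he | hk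
    · exact Or.inl he.symm
    · exact Or.inr (Or.inr hk)
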